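/- Let M be a positive natural number and let x_1, …, x_M be complex numbers, with x_m = x_{mI} + i·x_{mQ}, satisfying Σ_{m=1}^M x_{mI}² = Σ_{m=1}^M x_{mQ}² and Σ_{m=1}^M x_{mI}·x_{mQ} = 0. For ζ ∈ [0,1] and θ ∈ ℝ define the hybrid-shaped constellation by the real linear map [v_{mI}, v_{mQ}]ᵀ = A(ζ)·R(θ)·[x_{mI}, x_{mQ}]ᵀ, where A(ζ) = diag(√(1+ζ), √(1−ζ)) and R(θ) is the rotation matrix [[cos θ, −sin θ],[sin θ, cos θ]]. Then Σ_{m=1}^M |v_m|² = Σ_{m=1}^M |x_m|², and Σ_{m=1}^M v_m² = ζ·Σ_{m=1}^M |x_m|², where v_m = v_{mI} + i·v_{mQ}; hence if Σ|x_m|² > 0 the circularity coefficient of the transformed constellation is ζ. -/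

import Mathlib

open Complex Finset

/-- Hybrid-shaping parameterization (Section V-A): rotating a symmetric constellation
by `R(θ)` and then translating by `A(ζ) = diag(√(1+ζ), √(1−ζ))` preserves the total
power and induces pseudo-power `ζ Σ|x_m|²`, i.e. circularity coefficient `ζ`. -/
theorem hybrid_shaping_power_invariance
    (M : ℕ) (hM : 0 < M) (x : Fin M → ℂ)
    (hsym : (∑ m, (x m).re ^ 2) = ∑ m, (x m).im ^ 2)
    (huncorr : (∑ m, (x m).re * (x m).im) = 0)
    (ζ : ℝ) (hζ0 : 0 ≤ ζ) (hζ1 : ζ ≤ 1) (θ : ℝ)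
    (vI vQ : Fin M → ℝ)
    (hvI : ∀ m, vI m = Real.sqrt (1 + ζ) *
        (Real.cos θ * (x m).re - Real.sin θ * (x m).im))
    (hvQ : ∀ m, vQ m = Real.sqrt (1 - ζ) *
        (Real.sin θ * (x m).re + Real.cos θ * (x m).im))
    (v : Fin M → ℂ) (hv : ∀ m, v m = ((vI m : ℝ) : ℂ) + Complex.I * ((vQ m : ℝ) : ℂ)) :
    (∑ m, ‖v m‖ ^ 2) = ∑ m, ‖x m‖ ^ 2 ∧
    (∑ m, (v m) ^ 2) = (ζ : ℂ) * ((∑ m, ‖x m‖ ^ 2 : ℝ) : ℂ) ∧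
    ((∑ m, ‖x m‖ ^ 2) > 0 →
      ‖∑ m, (v m) ^ 2‖ / (∑ m, ‖v m‖ ^ 2) = ζ) := by
  set c := Real.cos θ
  set s := Real.sin θ
  have hcs : s ^ 2 + c ^ 2 = 1 := Real.sin_sq_add_cos_sq θ
  have hp : Real.sqrt (1 + ζ) ^ 2 = 1 + ζ := Real.sq_sqrt (by linarith)
  have hm : Real.sqrt (1 - ζ) ^ 2 = 1 - ζ := Real.sq_sqrt (by linarith)
  set S := ∑ m, (x m).re ^ 2 with hS
  -- sums of products
  have hA : ∑ m, (vI m) ^ 2 = (1 + ζ) * S := by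
    have : ∀ m ∈ univ, (vI m) ^ 2 =
        ((1 + ζ) * c ^ 2) * (x m).re ^ 2 + ((1 + ζ) * s ^ 2) * (x m).im ^ 2
          + (-(1 + ζ) * (2 * c * s)) * ((x m).re * (x m).im) := by
      intro m _
      rw [hvI m, mul_pow, hp]; ring
    rw [Finset.sum_congr rfl this]
    simp only [Finset.sum_add_distrib, ← Finset.mul_sum]
    rw [huncorr, ← hsym, ← hS]
    linear_combination (1 + ζ) * S * hcs
  have hB : ∑ m, (vQ m) ^ 2 = (1 - ζ) * S := by
    have : ∀ m ∈ univ, (vQ m) ^ 2 =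
        ((1 - ζ) * s ^ 2) * (x m).re ^ 2 + ((1 - ζ) * c ^ 2) * (x m).im ^ 2
          + ((1 - ζ) * (2 * c * s)) * ((x m).re * (x m).im) := by
      intro m _
      rw [hvQ m, mul_pow, hm]; ring
    rw [Finset.sum_congr rfl this]
    simp only [Finset.sum_add_distrib, ← Finset.mul_sum]
    rw [huncorr, ← hsym, ← hS]
    linear_combination (1 - ζ) * S * hcs
  have hC : ∑ m, (vI m) * (vQ m) = 0 := by
    set k := Real.sqrt (1 + ζ) * Real.sqrt (1 - ζ)
    have : ∀ m ∈ univ, (vI m) * (vQ m) =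
        (k * (c * s)) * (x m).re ^ 2 + (-(k * (c * s))) * (x m).im ^ 2
          + (k * (c ^ 2 - s ^ 2)) * ((x m).re * (x m).im) := by
      intro m _
      rw [hvI m, hvQ m]; ring
    rw [Finset.sum_congr rfl this]
    simp only [Finset.sum_add_distrib, ← Finset.mul_sum]
    rw [huncorr, ← hsym, ← hS]
    ring
  have hre : ∀ m, (v m).re = vI m := by intro m; simp [hv m]
  have him : ∀ m, (v m).im = vQ m := by intro m; simp [hv m]
  have hnormv : ∀ m, ‖v m‖ ^ 2 = (vI m) ^ 2 + (vQ m) ^ 2 := by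
    intro m
    rw [Complex.sq_norm, Complex.normSq_apply, hre, him]; ring
  have hnormx : ∀ m, ‖x m‖ ^ 2 = (x m).re ^ 2 + (x m).im ^ 2 := by
    intro m
    rw [Complex.sq_norm, Complex.normSq_apply]; ring
  have hxsum : (∑ m, ‖x m‖ ^ 2) = 2 * S := by
    rw [Finset.sum_congr rfl fun m _ => hnormx m, Finset.sum_add_distrib, ← hsym]; ring
  have hvsum : (∑ m, ‖v m‖ ^ 2) = 2 * S := by
    rw [Finset.sum_congr rfl fun m _ => hnormv m, Finset.sum_add_distrib, hA, hB]; ring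
  have h1 : (∑ m, ‖v m‖ ^ 2) = ∑ m, ‖x m‖ ^ 2 := by rw [hvsum, hxsum]
  have h2 : (∑ m, (v m) ^ 2) = (ζ : ℂ) * ((∑ m, ‖x m‖ ^ 2 : ℝ) : ℂ) := by
    have hsq : ∀ m ∈ univ, (v m) ^ 2 =
        ((((vI m) ^ 2 - (vQ m) ^ 2 : ℝ)) : ℂ) + (((2 * (vI m * vQ m) : ℝ)) : ℂ) * Complex.I := by
      intro m _
      apply Complex.ext <;>
        simp [hv m, pow_two, Complex.mul_re, Complex.mul_im] <;> ring
    rw [Finset.sum_congr rfl hsq, Finset.sum_add_distrib, ← Finset.sum_mul]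
    have e1 : ∑ m, ((vI m) ^ 2 - (vQ m) ^ 2) = 2 * ζ * S := by
      rw [Finset.sum_sub_distrib, hA, hB]; ring
    have e2 : ∑ m, (2 * (vI m * vQ m)) = 0 := by
      rw [← Finset.mul_sum, hC]; ring
    rw [show (∑ m, (((vI m) ^ 2 - (vQ m) ^ 2 : ℝ) : ℂ)) = ((2 * ζ * S : ℝ) : ℂ) by
          rw [← Complex.ofReal_sum, e1],
        show (∑ m, (((2 * (vI m * vQ m) : ℝ)) : ℂ)) = 0 by
          rw [← Complex.ofReal_sum, e2]; simp,
        hxsum]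
    push_cast; ring
  refine ⟨h1, h2, fun hpos => ?_⟩
  have hS0 : 0 < S := by rw [hxsum] at hpos; linarith
  rw [h2, h1, hxsum, norm_mul, Complex.norm_real, Complex.norm_real, Real.norm_eq_abs, Real.norm_eq_abs,
    _root_.abs_of_nonneg hζ0, _root_.abs_of_nonneg (by linarith : (0:ℝ) ≤ 2 * S)]
  field_simp
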